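/- Let R = ⟨A,V,C,W,h⟩ be a restricted regular constraint with A = ⟨Q,Σ,δ⟩ a 1-or-(|S|+1) DTA. Let S be a finite set of terms and let s ∈ T_Σ(V−W) be structurally subsumed by all terms in S with respect to R, with h ≥ |Q| + height(s). Then L(⟨{s},R⟩) − L(⟨S,R⟩) = { φ(s) | φ ∈ Sol(⟨F(s,S,W,h), A, C⟩) }, where F(s,S,W,h) is the disjunction, over all S' ⊆ S, all P,U ∈ selPos(S') with P(s') ≠ U(s') and s'[P(s')] = s'[U(s')] for every s' ∈ S', and all T ∈ selPos(S−S',W), of the conjunction (⋀_{t∈S'} s/P(t) ≠ s/U(t)) ∧ (⋀_{t∈S−S'} height(s/T(t)) > h). -/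

import Mathlib

namespace RITRC

/-- Terms over a signature (symbols `F` with arities `ar`) with variables in `V`. -/
inductive Term (F : Type) (ar : F → ℕ) (V : Type) : Type where
  | var : V → Term F ar V
  | app : (f : F) → (Fin (ar f) → Term F ar V) → Term F ar V

/-- Ground terms (terms without variables). -/
abbrev GTerm (F : Type) (ar : F → ℕ) : Type := Term F ar Empty

variable {F V V' Q : Type} {ar : F → ℕ}

/-- Applying a substitution to a term. -/
def Term.subst (φ : V → Term F ar V') : Term F ar V → Term F ar V'
  | .var x => φ x
  | .app f ts => .app f (fun i => (ts i).subst φ)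

/-- The height of a term. -/
def Term.height : Term F ar V → ℕ
  | .var _ => 0
  | .app _ ts => Finset.univ.sup (fun i => (ts i).height + 1)

/-- The size of a term. -/
def Term.size : Term F ar V → ℕ
  | .var _ => 1
  | .app _ ts => 1 + ∑ i, (ts i).size

/-- The subterm of a term at a position (a list of child indices), if it exists. -/
def Term.sub : Term F ar V → List ℕ → Option (Term F ar V)
  | t, [] => some t
  | .var _, _ :: _ => none
  | .app f ts, i :: p => if h : i < ar f then (ts ⟨i, h⟩).sub p else none

/-- The root symbol of a term: a function symbol or a variable. -/
def Term.rootSym : Term F ar V → F ⊕ V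
  | .var x => .inr x
  | .app f _ => .inl f

/-- `p` is a position of `t`. -/
def Term.isPos (t : Term F ar V) (p : List ℕ) : Prop := t.sub p ≠ none

/-- `p` is a variable position of `t`. -/
def Term.isVarPos (t : Term F ar V) (p : List ℕ) : Prop :=
  ∃ x, t.sub p = some (Term.var x)

/-- `p` is a non-variable position of `t`. -/
def Term.isNonVarPos (t : Term F ar V) (p : List ℕ) : Prop :=
  ∃ f ts, t.sub p = some (Term.app f ts)

/-- The variable `x` occurs in `t`. -/
def Term.varOccurs (t : Term F ar V) (x : V) : Prop :=
  ∃ p, t.sub p = some (Term.var x)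

/-- The variable `x` occurs at least twice in `t`. -/
def Term.occursTwice (t : Term F ar V) (x : V) : Prop :=
  ∃ p q, p ≠ q ∧ t.sub p = some (Term.var x) ∧ t.sub q = some (Term.var x)

/-- `t` is determined at position `p`: either `p` is a non-variable position
of `t`, or some prefix of `p` is labeled by a constant symbol. -/
def Term.determinedAt (t : Term F ar V) (p : List ℕ) : Prop :=
  t.isNonVarPos p ∨ ∃ p', p' <+: p ∧ ∃ f ts, t.sub p' = some (Term.app f ts) ∧ ar f = 0

/-- A deterministic tree automaton: at most one transition `f(q₁,…,qₖ) → q`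
for every `f` and states `q₁,…,qₖ`. -/
structure DTA (F : Type) (ar : F → ℕ) (Q : Type) : Type where
  δ : (f : F) → (Fin (ar f) → Q) → Option Q

/-- Collect a family of optional values into an optional family. -/
def allSome {n : ℕ} {α : Type} (g : Fin n → Option α) : Option (Fin n → α) :=
  if h : ∀ i, (g i).isSome then some (fun i => (g i).get (h i)) else none

/-- The state reached by `A` on a term, where variables are pre-assigned states by `C`. -/
def DTA.runC (A : DTA F ar Q) (C : V → Q) : Term F ar V → Option Q
  | .var x => some (C x)
  | .app f ts => (allSome (fun i => A.runC C (ts i))).bind (A.δ f)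

/-- The state reached by `A` on a ground term. -/
def DTA.run (A : DTA F ar Q) : GTerm F ar → Option Q :=
  A.runC (fun x => x.elim)

/-- `L(A,q)`: the set of ground terms on which `A` reaches state `q`. -/
def DTA.lang (A : DTA F ar Q) (q : Q) : Set (GTerm F ar) :=
  {t | A.run t = some q}

/-- `A` is complete. -/
def DTA.Complete (A : DTA F ar Q) : Prop :=
  ∀ (f : F) (qs : Fin (ar f) → Q), (A.δ f qs).isSome

/-- `A` is a 1-or-n DTA: each state has exactly one, or at least `n`, terms. -/
def DTA.OneOr (A : DTA F ar Q) (n : ℕ) : Prop :=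
  ∀ q : Q, (A.lang q).encard = 1 ∨ (n : ℕ∞) ≤ (A.lang q).encard

/-- The number of transitions of a DTA. -/
noncomputable def DTA.numTrans [Fintype F] [Fintype Q] (A : DTA F ar Q) : ℕ :=
  ∑ f : F, ∑ qs : Fin (ar f) → Q, if (A.δ f qs).isSome then 1 else 0

/-- A set of ground terms is regular if it is recognized by some (finite) DTA. -/
def IsRegular (L : Set (GTerm F ar)) : Prop :=
  ∃ (Q : Type) (_ : Fintype Q) (A : DTA F ar Q) (Facc : Set Q),
    L = {t | ∃ q ∈ Facc, A.run t = some q}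

/-- A DTA bundled with its (finite) state type and accepting states. -/
structure NDTA (F : Type) (ar : F → ℕ) : Type 1 where
  Q : Type
  fin : Fintype Q
  A : DTA F ar Q
  acc : Set Q

/-- The language recognized by a bundled DTA. -/
def NDTA.lang (N : NDTA F ar) : Set (GTerm F ar) :=
  {t | ∃ q ∈ N.acc, N.A.run t = some q}

/-- The size of a bundled DTA: number of states plus sum of sizes of transitions. -/
noncomputable def NDTA.size [Fintype F] (N : NDTA F ar) : ℕ :=
  letI := N.fin
  Fintype.card N.Q +
    ∑ f : F, ∑ qs : Fin (ar f) → N.Q, if (N.A.δ f qs).isSome then ar f + 2 else 0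

/-- `L(⟨S,M⟩)`: the language of a set of terms `S` with regular constraints `M`. -/
def langM (S : Set (Term F ar V)) (M : V → NDTA F ar) : Set (GTerm F ar) :=
  {t | ∃ s ∈ S, ∃ φ : V → GTerm F ar, (∀ x, φ x ∈ (M x).lang) ∧ t = s.subst φ}

/-- `L(⟨S,R⟩)` for a single regular constraint `R = ⟨A,C⟩`. -/
def langSingle (S : Set (Term F ar V)) (A : DTA F ar Q) (C : V → Q) :
    Set (GTerm F ar) :=
  {t | ∃ s ∈ S, ∃ φ : V → GTerm F ar, (∀ x, A.run (φ x) = some (C x)) ∧ t = s.subst φ}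

/-- A restricted regular constraint `R = ⟨A,V,C,W,h⟩`. -/
structure RRC (F : Type) (ar : F → ℕ) (V Q : Type) : Type where
  A : DTA F ar Q
  C : V → Q
  W : Set V
  hgt : ℕ

/-- A solution of a restricted regular constraint. -/
def RRC.IsSolution (R : RRC F ar V Q) (φ : V → GTerm F ar) : Prop :=
  (∀ x, R.A.run (φ x) = some (R.C x)) ∧ ∀ x ∈ R.W, (φ x).height ≤ R.hgt

/-- `L(⟨S,R⟩)` for a restricted regular constraint `R`. -/
def RRC.lang (R : RRC F ar V Q) (S : Set (Term F ar V)) : Set (GTerm F ar) :=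
  {t | ∃ s ∈ S, ∃ φ, R.IsSolution φ ∧ t = s.subst φ}

/-- Renaming the variables of a term. -/
def Term.rename (ρ : V → V') (t : Term F ar V) : Term F ar V' :=
  t.subst (fun x => Term.var (ρ x))

/-- `s` and `t` are structurally similar: `t` is obtained from `s` by an
injective variable renaming. -/
def StructSim (s : Term F ar V) (t : Term F ar V') : Prop :=
  ∃ ρ : V → V', Function.Injective ρ ∧ t = s.rename ρ

/-- `s` and `t` are structurally equal with respect to the state assignment `C`. -/
def StructEq (C : V → Q) (s t : Term F ar V) : Prop :=
  StructSim s t ∧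
    ∀ p x y, s.sub p = some (Term.var x) → t.sub p = some (Term.var y) → C x = C y

/-- `s` is structurally subsumed by `t` (with respect to `A` and `C`). -/
def StructSub (A : DTA F ar Q) (C : V → Q) (s t : Term F ar V) : Prop :=
  (∀ p f ts, t.sub p = some (Term.app f ts) →
    ∃ sp, s.sub p = some sp ∧ sp.rootSym = Sum.inl f) ∧
  (∀ p tp, t.sub p = some tp → ∃ sp, s.sub p = some sp ∧ A.runC C tp = A.runC C sp)

/-- Building a binary term `f(t,u)` from a symbol of arity 2. -/
def mkBin {f : F} (h : ar f = 2) (t u : Term F ar V) : Term F ar V :=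
  Term.app f (fun i => if (i : ℕ) = 0 then t else u)

/-- `s` satisfies the infinite-instances property in `⟨S,R⟩`. -/
def InfiniteInstances (R : RRC F ar V Q) (S : Set (Term F ar V)) (s : Term F ar V) :
    Prop :=
  ∃ x, s.occursTwice x ∧
    ∃ φ : ℕ → (V → GTerm F ar),
      (∀ i, R.IsSolution (φ i)) ∧
      (∀ i, s.subst (φ i) ∉ R.lang (S \ {s})) ∧
      (∀ i j, i ≠ j → φ i x ≠ φ j x)

/-- The set of prefixes of a finite set of positions. -/
def prefixes (P : Finset (List ℕ)) : Finset (List ℕ) :=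
  P.biUnion (fun p => p.inits.toFinset)


/-- `φ` satisfies the formula `F(s,S,W,h)` of Definition `definition-formula`:
the disjunction over `S' ⊆ S`, selections `P,U ∈ selPos(S')` with
`P(s') ≠ U(s')` and `s'[P(s')] = s'[U(s')]`, and `T ∈ selPos(S∖S',W)`, of the
conjunctions `⋀_{t∈S'} s/P(t) ≠ s/U(t)  ∧  ⋀_{t∈S∖S'} height(s/T(t)) > h`. -/
def SatF {F V Q : Type} {ar : F → ℕ} (R : RRC F ar V Q) (s : Term F ar V)
    (S : Finset (Term F ar V)) (φ : V → GTerm F ar) : Prop :=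
  ∃ S' ⊆ S, ∃ P U T : Term F ar V → List ℕ,
    -- P, U select two distinct positions of the same variable in each t ∈ S'
    (∀ t ∈ S', P t ≠ U t ∧ ∃ x : V,
      t.sub (P t) = some (Term.var x) ∧ t.sub (U t) = some (Term.var x)) ∧
    -- T selects a position of a variable of W in each t ∈ S ∖ S'
    (∀ t ∈ S, t ∉ S' → ∃ x : V, t.sub (T t) = some (Term.var x) ∧ x ∈ R.W) ∧
    -- the inequality predicates φ(s/P(t)) ≠ φ(s/U(t)) hold
    (∀ t ∈ S', ∃ sp su : Term F ar V, s.sub (P t) = some sp ∧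
      s.sub (U t) = some su ∧ sp.subst φ ≠ su.subst φ) ∧
    -- the height predicates height(φ(s/T(t))) > h hold
    (∀ t ∈ S, t ∉ S' → ∃ sp : Term F ar V, s.sub (T t) = some sp ∧
      R.hgt < (sp.subst φ).height)

section Aux

variable {F V V' Q : Type} {ar : F → ℕ}

lemma Term.sub_nil (t : Term F ar V) : t.sub [] = some t := by cases t <;> rfl

lemma Term.sub_cons_fin (f : F) (ts : Fin (ar f) → Term F ar V) (i : Fin (ar f))
    (p : List ℕ) : (Term.app f ts).sub ((i : ℕ) :: p) = (ts i).sub p := by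
  simp [Term.sub]

lemma Term.sub_append (t : Term F ar V) (p q : List ℕ) :
    t.sub (p ++ q) = (t.sub p).bind (fun u => u.sub q) := by
  induction p generalizing t with
  | nil => simp [Term.sub_nil]
  | cons i p ih =>
    cases t with
    | var x => rfl
    | app f ts =>
      show Term.sub _ (i :: (p ++ q)) = _
      simp only [Term.sub]
      split
      · exact ih _
      · rfl

lemma Term.subst_sub {s sp : Term F ar V} {p : List ℕ} (h : s.sub p = some sp)
    (φ : V → Term F ar V') : (s.subst φ).sub p = some (sp.subst φ) := by
  induction p generalizing s with
  | nil => rw [Term.sub_nil] at h; cases h; exact Term.sub_nil _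
  | cons i p ih =>
    cases s with
    | var x => exact absurd h (by simp [Term.sub])
    | app f ts =>
      simp only [Term.sub] at h
      split at h
      · next hlt =>
        show Term.sub (Term.app f _) (i :: p) = _
        simp only [Term.sub, dif_pos hlt]
        exact ih h
      · exact absurd h (by simp)

lemma Term.subst_congr {s : Term F ar V} {φ φ' : V → Term F ar V'}
    (h : ∀ x, s.varOccurs x → φ x = φ' x) : s.subst φ = s.subst φ' := by
  induction s with
  | var x => exact h x ⟨[], rfl⟩
  | app f ts ih =>
    show Term.app f _ = Term.app f _
    congr 1
    funext i
    refine ih i (fun x hx => h x ?_)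
    obtain ⟨p, hp⟩ := hx
    exact ⟨(i : ℕ) :: p, by rw [Term.sub_cons_fin]; exact hp⟩

lemma allSome_eq_some {n : ℕ} {α : Type} {g : Fin n → Option α} {v : Fin n → α}
    (h : ∀ i, g i = some (v i)) : allSome g = some v := by
  unfold allSome
  rw [dif_pos (fun i => by simp [h i])]
  congr 1
  funext i
  simp [h i]

lemma allSome_eq_some' {n : ℕ} {α : Type} {g : Fin n → Option α} {v : Fin n → α}
    (h : allSome g = some v) (i : Fin n) : g i = some (v i) := by
  unfold allSome at h
  split at h
  · next hall =>
    have := congrFun (Option.some.injEq _ _ ▸ h : _) i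
    simp only [← this]
    exact (Option.some_get (hall i)).symm
  · exact absurd h (by simp)

lemma DTA.run_app (A : DTA F ar Q) (f : F) (ts : Fin (ar f) → GTerm F ar) :
    A.run (Term.app f ts) = (allSome (fun i => A.run (ts i))).bind (A.δ f) := rfl

lemma DTA.run_subst (A : DTA F ar Q) (C : V → Q) (φ : V → GTerm F ar)
    (hφ : ∀ x, A.run (φ x) = some (C x)) (t : Term F ar V) :
    A.run (t.subst φ) = A.runC C t := by
  induction t with
  | var x => exact hφ x
  | app f ts ih =>
    show (allSome (fun i => A.run ((ts i).subst φ))).bind (A.δ f)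
        = (allSome (fun i => A.runC C (ts i))).bind (A.δ f)
    congr 2
    funext i
    exact ih i

/-- Key structural lemma: if `t`'s non-variable positions match `s` and `ψ`
agrees with `φ ∘ (s/·)` at variable positions, then `t.subst ψ = s.subst φ`. -/
lemma subst_eq_of_match {s t : Term F ar V} {φ ψ : V → GTerm F ar}
    (h1 : ∀ p f ts', t.sub p = some (Term.app f ts') →
        ∃ sp, s.sub p = some sp ∧ sp.rootSym = Sum.inl f)
    (h2 : ∀ p y, t.sub p = some (Term.var y) →
        ∃ sp, s.sub p = some sp ∧ ψ y = sp.subst φ) :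
    t.subst ψ = s.subst φ := by
  induction t generalizing s with
  | var y =>
    obtain ⟨sp, hsp, hv⟩ := h2 [] y (Term.sub_nil _)
    rw [Term.sub_nil] at hsp; cases hsp
    exact hv
  | app f ts ih =>
    obtain ⟨sp, hsp, hroot⟩ := h1 [] f ts (Term.sub_nil _)
    rw [Term.sub_nil, Option.some_inj] at hsp
    subst hsp
    cases s with
    | var x => exact absurd hroot (by simp [Term.rootSym])
    | app g ss =>
      have hg : g = f := by simpa [Term.rootSym] using hroot
      subst hg
      show Term.app g _ = Term.app g _
      congr 1
      funext i
      refine ih i (fun p f' ts' hp => ?_) (fun p y hp => ?_)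
      · obtain ⟨sp, hsp, hr⟩ := h1 ((i : ℕ) :: p) f' ts'
          (by rw [Term.sub_cons_fin]; exact hp)
        rw [Term.sub_cons_fin] at hsp
        exact ⟨sp, hsp, hr⟩
      · obtain ⟨sp, hsp, hr⟩ := h2 ((i : ℕ) :: p) y
          (by rw [Term.sub_cons_fin]; exact hp)
        rw [Term.sub_cons_fin] at hsp
        exact ⟨sp, hsp, hr⟩

/-! Reachability and short terms. -/

def reachN (A : DTA F ar Q) : ℕ → Set Q
  | 0 => ∅
  | n+1 => {q | ∃ (f : F) (qs : Fin (ar f) → Q),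
      (∀ i, qs i ∈ reachN A n) ∧ A.δ f qs = some q}

lemma mem_reachN (A : DTA F ar Q) (n : ℕ) :
    ∀ q : Q, q ∈ reachN A n ↔ ∃ t : GTerm F ar, A.run t = some q ∧ t.height < n := by
  induction n with
  | zero => intro q; simp [reachN]
  | succ n ih =>
    intro q
    constructor
    · rintro ⟨f, qs, hqs, hδ⟩
      choose ts hrun hht using fun i => (ih (qs i)).mp (hqs i)
      refine ⟨Term.app f ts, ?_, ?_⟩
      · rw [DTA.run_app, allSome_eq_some hrun]
        exact hδ
      · show Term.height _ < n + 1
        simp only [Term.height]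
        rw [Finset.sup_lt_iff (by simp : (⊥ : ℕ) < n + 1)]
        intro i _
        have := hht i
        omega
    · rintro ⟨t, hrun, hht⟩
      cases t with
      | var x => exact x.elim
      | app f ts =>
        rw [DTA.run_app] at hrun
        obtain ⟨qs, hall, hδ⟩ := Option.bind_eq_some_iff.mp hrun
        refine ⟨f, qs, fun i => (ih (qs i)).mpr ⟨ts i, allSome_eq_some' hall i, ?_⟩, hδ⟩
        have h1 : (ts i).height + 1 ≤ (Term.app f ts).height :=
          Finset.le_sup (f := fun i => (ts i).height + 1) (Finset.mem_univ i)
        omega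

lemma reachN_mono (A : DTA F ar Q) {n m : ℕ} (h : n ≤ m) :
    reachN A n ⊆ reachN A m := by
  intro q hq
  rw [mem_reachN] at hq ⊢
  obtain ⟨t, ht, hh⟩ := hq
  exact ⟨t, ht, lt_of_lt_of_le hh h⟩

lemma reachN_stab (A : DTA F ar Q) {n : ℕ} (h : reachN A n = reachN A (n+1))
    (m : ℕ) : reachN A (n + m) = reachN A n := by
  induction m with
  | zero => rfl
  | succ m ih =>
    have : reachN A (n + m + 1) = reachN A (n + 1) := by
      show reachN A ((n + m) + 1) = _
      simp only [reachN, ih]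
    have e : n + (m + 1) = (n + m) + 1 := by omega
    rw [e, this, ← h]

lemma exists_stab (A : DTA F ar Q) [Fintype Q] :
    ∃ n ≤ Fintype.card Q, reachN A n = reachN A (n+1) := by
  by_contra hcon
  push_neg at hcon
  have key : ∀ n, n ≤ Fintype.card Q + 1 → n ≤ (reachN A n).ncard := by
    intro n
    induction n with
    | zero => simp
    | succ n ih =>
      intro hn
      have h1 : reachN A n ⊂ reachN A (n+1) :=
        ssubset_of_subset_of_ne (reachN_mono A (by omega)) (hcon n (by omega))
      have h2 := Set.ncard_lt_ncard h1 (Set.toFinite _)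
      have := ih (by omega)
      omega
  have h3 := key (Fintype.card Q + 1) le_rfl
  have h4 : (reachN A (Fintype.card Q + 1)).ncard ≤ Fintype.card Q := by
    have := Set.ncard_le_ncard (Set.subset_univ (reachN A (Fintype.card Q + 1)))
      (Set.toFinite _)
    rwa [Set.ncard_univ, Nat.card_eq_fintype_card] at this
  omega

lemma exists_short (A : DTA F ar Q) [Fintype Q] {q : Q}
    (h : ∃ t : GTerm F ar, A.run t = some q) :
    ∃ t : GTerm F ar, A.run t = some q ∧ t.height < Fintype.card Q := by
  obtain ⟨t, ht⟩ := h
  obtain ⟨n, hn, hstab⟩ := exists_stab A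
  have h1 : q ∈ reachN A (t.height + 1) :=
    (mem_reachN A _ q).mpr ⟨t, ht, by omega⟩
  have h2 : q ∈ reachN A n := by
    rcases le_total (t.height + 1) n with h' | h'
    · exact reachN_mono A h' h1
    · rw [← reachN_stab A hstab (t.height + 1 - n)]
      have : n + (t.height + 1 - n) = t.height + 1 := by omega
      rw [this]; exact h1
  exact (mem_reachN A _ q).mp (reachN_mono A hn h2)

end Aux

/-- under the stated hypotheses, the instances of `⟨{s},R⟩` that
are not instances of `⟨S,R⟩` are exactly the terms `φ(s)` for solutions `φ` of
the constrained formula `⟨F(s,S,W,h),A,C⟩`. -/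
theorem diff_lang_eq_formula_solutions {F V Q : Type} {ar : F → ℕ}
    [Fintype F] [Fintype Q] [Fintype V]
    (R : RRC F ar V Q) (S : Finset (Term F ar V)) (s : Term F ar V)
    (h1 : R.A.OneOr (S.card + 1))
    (hsub : ∀ t ∈ S, StructSub R.A R.C s t)
    (hW : ∀ x : V, s.varOccurs x → x ∉ R.W)
    (hh : Fintype.card Q + s.height ≤ R.hgt) :
    R.lang {s} \ R.lang ↑S =
      {u : GTerm F ar | ∃ φ : V → GTerm F ar,
        (∀ x : V, R.A.run (φ x) = some (R.C x)) ∧ SatF R s S φ ∧ u = s.subst φ} := by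
  classical
  ext u
  simp only [Set.mem_diff, Set.mem_setOf_eq]
  constructor
  · rintro ⟨⟨s₀, hs₀, φ, hφsol, hu⟩, hnot⟩
    rw [Set.mem_singleton_iff] at hs₀
    rw [hs₀] at hu
    clear hs₀
    refine ⟨φ, hφsol.1, ?_, hu⟩
    set Good : Term F ar V → Prop := fun t => ∃ p q : List ℕ, p ≠ q ∧
      (∃ x, t.sub p = some (Term.var x) ∧ t.sub q = some (Term.var x)) ∧
      (∃ sp su, s.sub p = some sp ∧ s.sub q = some su ∧
        sp.subst φ ≠ su.subst φ) with hGoodDef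
    set Bad : Term F ar V → Prop := fun t => ∃ p : List ℕ,
      (∃ x, t.sub p = some (Term.var x) ∧ x ∈ R.W) ∧
      (∃ sp, s.sub p = some sp ∧ R.hgt < (sp.subst φ).height) with hBadDef
    -- the key claim: if no pair of duplicated-variable positions distinguishes
    -- φ, then some W-variable position must exceed the height bound
    have hkey : ∀ t ∈ S, ¬ Good t → Bad t := by
      intro t ht hG
      by_contra hB
      have hst := hsub t ht
      -- choose a position for each variable occurring in t
      choose pos hpos using fun (y : V) (h : t.varOccurs y) => h
      choose spv hspv hrunv using
        fun (y : V) (h : t.varOccurs y) => hst.2 (pos y h) _ (hpos y h)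
      set ψ : V → GTerm F ar := fun y =>
        if h : t.varOccurs y then (spv y h).subst φ else φ y with hψdef
      have hwd : ∀ (p : List ℕ) (y : V) (sp : Term F ar V),
          t.sub p = some (Term.var y) → s.sub p = some sp →
          ∀ (h : t.varOccurs y), (spv y h).subst φ = sp.subst φ := by
        intro p y sp hp hsp h
        by_cases hpe : pos y h = p
        · have h2 := hspv y h
          rw [hpe, hsp] at h2
          rw [Option.some_inj] at h2
          rw [h2]
        · by_contra hne
          exact hG ⟨pos y h, p, hpe, ⟨y, hpos y h, hp⟩,
            ⟨spv y h, sp, hspv y h, hsp, hne⟩⟩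
      have hψeq : t.subst ψ = s.subst φ := by
        refine subst_eq_of_match hst.1 (fun p y hp => ?_)
        obtain ⟨sp, hsp, -⟩ := hst.2 p _ hp
        have hocc : t.varOccurs y := ⟨p, hp⟩
        refine ⟨sp, hsp, ?_⟩
        rw [hψdef]
        simp only [dif_pos hocc]
        exact hwd p y sp hp hsp hocc
      have hψsol : R.IsSolution ψ := by
        constructor
        · intro y
          rw [hψdef]
          by_cases h : t.varOccurs y
          · simp only [dif_pos h]
            rw [DTA.run_subst R.A R.C φ hφsol.1]
            rw [← hrunv y h]
            rfl
          · simp only [dif_neg h]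
            exact hφsol.1 y
        · intro y hyW
          rw [hψdef]
          by_cases h : t.varOccurs y
          · simp only [dif_pos h]
            by_contra hgt'
            refine hB ⟨pos y h, ⟨y, hpos y h, hyW⟩, spv y h, hspv y h, ?_⟩
            omega
          · simp only [dif_neg h]
            exact hφsol.2 y hyW
      exact hnot ⟨t, Finset.mem_coe.mpr ht, ψ, hψsol, by rw [hu, ← hψeq]⟩
    -- assemble the formula witness
    refine ⟨S.filter Good, Finset.filter_subset _ _,
      (fun t => if h : Good t then h.choose else []),
      (fun t => if h : Good t then h.choose_spec.choose else []),
      (fun t => if h : Bad t then h.choose else []),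
      ?_, ?_, ?_, ?_⟩
    · intro t htS'
      have hG : Good t := (Finset.mem_filter.mp htS').2
      obtain ⟨hne, hvars, -⟩ := hG.choose_spec.choose_spec
      simp only [dif_pos hG]
      exact ⟨hne, hvars⟩
    · intro t htS htS'
      have hG : ¬ Good t := fun hG => htS' (Finset.mem_filter.mpr ⟨htS, hG⟩)
      have hB : Bad t := hkey t htS hG
      obtain ⟨hx, -⟩ := hB.choose_spec
      simp only [dif_pos hB]
      exact hx
    · intro t htS'
      have hG : Good t := (Finset.mem_filter.mp htS').2
      obtain ⟨-, -, hsub'⟩ := hG.choose_spec.choose_spec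
      simp only [dif_pos hG]
      exact hsub'
    · intro t htS htS'
      have hG : ¬ Good t := fun hG => htS' (Finset.mem_filter.mpr ⟨htS, hG⟩)
      have hB : Bad t := hkey t htS hG
      obtain ⟨-, hsp⟩ := hB.choose_spec
      simp only [dif_pos hB]
      exact hsp
  · rintro ⟨φ, hφrun, hsat, hu⟩
    have hshort : ∀ x : V, ∃ t : GTerm F ar,
        R.A.run t = some (R.C x) ∧ t.height < Fintype.card Q :=
      fun x => exists_short R.A ⟨φ x, hφrun x⟩
    choose short hshortrun hshortht using hshort
    set φ' : V → GTerm F ar := fun x =>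
      if s.varOccurs x then φ x else short x with hφ'def
    have hagree : s.subst φ = s.subst φ' := by
      refine Term.subst_congr (fun x hx => ?_)
      rw [hφ'def]; simp only [if_pos hx]
    have hφ'sol : R.IsSolution φ' := by
      constructor
      · intro x
        rw [hφ'def]
        by_cases h : s.varOccurs x
        · simp only [if_pos h]; exact hφrun x
        · simp only [if_neg h]; exact hshortrun x
      · intro x hxW
        rw [hφ'def]
        by_cases h : s.varOccurs x
        · exact absurd hxW (hW x h)
        · simp only [if_neg h]
          have := hshortht x
          omega
    constructor
    · exact ⟨s, Set.mem_singleton s, φ', hφ'sol, by rw [hu, hagree]⟩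
    · rintro ⟨t, htS, ψ, hψsol, huψ⟩
      rw [Finset.mem_coe] at htS
      obtain ⟨S', hS'sub, P, U, T, c1, c2, c3, c4⟩ := hsat
      by_cases htS' : t ∈ S'
      · obtain ⟨hne, x, htP, htU⟩ := c1 t htS'
        obtain ⟨sp, su, hsP, hsU, hneq⟩ := c3 t htS'
        have e1 : u.sub (P t) = some (sp.subst φ) := by
          rw [hu]; exact Term.subst_sub hsP φ
        have e2 : u.sub (P t) = some (ψ x) := by
          rw [huψ]; exact Term.subst_sub htP ψ
        have e3 : u.sub (U t) = some (su.subst φ) := by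
          rw [hu]; exact Term.subst_sub hsU φ
        have e4 : u.sub (U t) = some (ψ x) := by
          rw [huψ]; exact Term.subst_sub htU ψ
        rw [e2] at e1
        rw [e4] at e3
        rw [Option.some_inj] at e1 e3
        exact hneq (e1.symm.trans e3)
      · obtain ⟨x, htT, hxW⟩ := c2 t htS htS'
        obtain ⟨sp, hsT, hht⟩ := c4 t htS htS'
        have e1 : u.sub (T t) = some (sp.subst φ) := by
          rw [hu]; exact Term.subst_sub hsT φ
        have e2 : u.sub (T t) = some (ψ x) := by
          rw [huψ]; exact Term.subst_sub htT ψ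
        rw [e2, Option.some_inj] at e1
        have := hψsol.2 x hxW
        rw [e1] at this
        omega

end RITRC
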